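/- Theorem (IG + PL under relaxed SGC): suppose $f = \frac{1}{n}\sum_i f_i$ is $L$-smooth and $\mu$-PL with minimum $f(x^*)$, each $f_i$ is $L_{\max}$-smooth, and $\frac{1}{n}\sum_i\|\nabla f_i(x)\|^2 \leq \rho\|\nabla f(x)\|^2 + \sigma^2$ for all $x$. Run the incremental gradient method (fixed order $1, 2, \ldots, n$ each epoch) for $T$ epochs with step size $\eta \leq \min\{\frac{1}{\sqrt{2}nL_{\max}}, \frac{1}{2L_{\max}n\sqrt{\rho}}\}$. Then $f(x_n^T) - f(x^*) \leq \left(1 - \frac{n\mu\eta}{2}\right)^T(f(x^0) - f(x^*)) + \frac{2 L_{\max}^2 \eta^2 n^2 \sigma^2}{\mu}$. -/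

import Mathlib

noncomputable section

/-- One epoch of incremental-gradient updates in the fixed order `1, …, n`:
the iterate after `j` steps starting from `x0`, with gradient oracle `g` and
step size `η`. -/
def igIter {d n : ℕ}
    (g : Fin n → EuclideanSpace ℝ (Fin d) → EuclideanSpace ℝ (Fin d))
    (η : ℝ) (x0 : EuclideanSpace ℝ (Fin d)) :
    ℕ → EuclideanSpace ℝ (Fin d)
  | 0 => x0
  | j + 1 =>
      if h : j < n then
        igIter g η x0 j - η • g ⟨j, h⟩ (igIter g η x0 j)
      else igIter g η x0 j

open intervalIntegral in

lemma my_descent_lemma {E : Type*} [NormedAddCommGroup E] [InnerProductSpace ℝ E] [CompleteSpace E]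
    (F : E → ℝ) (hF : Differentiable ℝ F) (L : ℝ) (hL : 0 ≤ L)
    (hlip : ∀ x y, ‖gradient F x - gradient F y‖ ≤ L * ‖x - y‖) (x y : E) :
    F y ≤ F x + inner ℝ (gradient F x) (y - x) + L / 2 * ‖y - x‖ ^ 2 := by
  set v := y - x with hv
  have hcont : Continuous (fun z => gradient F z) := by
    refine (LipschitzWith.of_dist_le_mul (K := Real.toNNReal L) ?_).continuous
    intro a b
    simpa [dist_eq_norm, Real.coe_toNNReal L hL] using hlip a b
  have hderiv : ∀ t : ℝ, HasDerivAt (fun t : ℝ => F (x + t • v))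
      (inner ℝ (gradient F (x + t • v)) v) t := by
    intro t
    have hγ : HasDerivAt (fun t : ℝ => x + t • v) v t := by
      simpa using ((hasDerivAt_id t).smul_const v).const_add x
    have hFd : HasFDerivAt F (InnerProductSpace.toDual ℝ E (gradient F (x + t • v)))
        (x + t • v) := (hF (x + t • v)).hasGradientAt.hasFDerivAt
    exact (hFd.comp_hasDerivAt t hγ).congr_deriv (by rw [InnerProductSpace.toDual_apply_apply])
  have hcont' : Continuous (fun t : ℝ => (inner ℝ (gradient F (x + t • v)) v : ℝ)) := by
    exact (hcont.comp (by continuity)).inner continuous_const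
  have hFTC : F y - F x = ∫ t in (0:ℝ)..1, (inner ℝ (gradient F (x + t • v)) v : ℝ) := by
    rw [integral_eq_sub_of_hasDerivAt (fun t _ => hderiv t)
      (hcont'.intervalIntegrable 0 1)]
    simp [hv]
  have hbound : ∀ t ∈ Set.Icc (0:ℝ) 1,
      (inner ℝ (gradient F (x + t • v)) v : ℝ)
        ≤ inner ℝ (gradient F x) v + L * t * ‖v‖ ^ 2 := by
    intro t ht
    have h1 : (inner ℝ (gradient F (x + t • v)) v : ℝ) - inner ℝ (gradient F x) v
        = inner ℝ (gradient F (x + t • v) - gradient F x) v := by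
      rw [inner_sub_left]
    have h2 : (inner ℝ (gradient F (x + t • v) - gradient F x) v : ℝ)
        ≤ ‖gradient F (x + t • v) - gradient F x‖ * ‖v‖ :=
      real_inner_le_norm _ _
    have h3 : ‖gradient F (x + t • v) - gradient F x‖ ≤ L * (t * ‖v‖) := by
      have := hlip (x + t • v) x
      simpa [norm_smul, abs_of_nonneg ht.1] using this
    nlinarith [norm_nonneg v, mul_le_mul_of_nonneg_right h3 (norm_nonneg v)]
  have hint : (∫ t in (0:ℝ)..1, (inner ℝ (gradient F (x + t • v)) v : ℝ))
      ≤ ∫ t in (0:ℝ)..1, ((inner ℝ (gradient F x) v : ℝ) + L * t * ‖v‖ ^ 2) := by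
    apply integral_mono_on (by norm_num) (hcont'.intervalIntegrable 0 1)
      ((by continuity : Continuous fun t : ℝ => (inner ℝ (gradient F x) v : ℝ) + L * t * ‖v‖ ^ 2).intervalIntegrable 0 1)
    simpa using hbound
  have hval : (∫ t in (0:ℝ)..1, ((inner ℝ (gradient F x) v : ℝ) + L * t * ‖v‖ ^ 2))
      = inner ℝ (gradient F x) v + L / 2 * ‖v‖ ^ 2 := by
    rw [integral_add (intervalIntegrable_const)
      (((by continuity : Continuous fun t : ℝ => L * t * ‖v‖^2)).intervalIntegrable 0 1)]
    have : (∫ t in (0:ℝ)..1, L * t * ‖v‖ ^ 2) = L * ‖v‖^2 * ∫ t in (0:ℝ)..1, t := by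
      rw [← integral_const_mul]
      congr 1; ext t; ring
    rw [this]
    simp [integral_id]
    ring
  linarith [hFTC ▸ le_trans hint (le_of_eq hval)]

lemma my_gradient_avg {E : Type*} [NormedAddCommGroup E] [InnerProductSpace ℝ E] [CompleteSpace E]
    {n : ℕ} (f : Fin n → E → ℝ) (hdiff : ∀ i, Differentiable ℝ (f i)) (x : E) :
    gradient (fun x => (n : ℝ)⁻¹ * ∑ i, f i x) x = (n : ℝ)⁻¹ • ∑ i, gradient (f i) x := by
  have h : HasGradientAt (fun x => (n : ℝ)⁻¹ * ∑ i, f i x)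
      ((n : ℝ)⁻¹ • ∑ i, gradient (f i) x) x := by
    rw [hasGradientAt_iff_hasFDerivAt]
    have hsum : HasFDerivAt (fun x => ∑ i, f i x)
        (∑ i, InnerProductSpace.toDual ℝ E (gradient (f i) x)) x :=
      HasFDerivAt.fun_sum (fun i _ => ((hdiff i x).hasGradientAt).hasFDerivAt)
    have h2 := hsum.const_mul ((n : ℝ)⁻¹)
    exact h2.congr_fderiv (by simp only [map_smulₛₗ, map_sum, starRingEnd_apply, star_trivial])
  exact h.gradient

set_option maxHeartbeats 1000000 in
lemma my_epoch
    (d n : ℕ) (hn : 0 < n)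
    (f : Fin n → EuclideanSpace ℝ (Fin d) → ℝ)
    (F : EuclideanSpace ℝ (Fin d) → ℝ)
    (hFdiff : Differentiable ℝ F)
    (hgradF : ∀ x, (n : ℝ) • gradient F x = ∑ i, gradient (f i) x)
    (L Lmax μ : ℝ) (hL : 0 < L) (hμ : 0 < μ) (hLLmax : L ≤ Lmax)
    (hsmooth : ∀ x y : EuclideanSpace ℝ (Fin d),
      ‖gradient F x - gradient F y‖ ≤ L * ‖x - y‖)
    (hsmooth_i : ∀ i, ∀ x y : EuclideanSpace ℝ (Fin d),
      ‖gradient (f i) x - gradient (f i) y‖ ≤ Lmax * ‖x - y‖)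
    (xstar : EuclideanSpace ℝ (Fin d))
    (hPL : ∀ x, F x - F xstar ≤ 1 / (2 * μ) * ‖gradient F x‖ ^ 2)
    (ρ σ : ℝ) (hρ : 1 ≤ ρ) (hσ : 0 ≤ σ)
    (hSGC : ∀ x, (n : ℝ)⁻¹ * ∑ i, ‖gradient (f i) x‖ ^ 2
      ≤ ρ * ‖gradient F x‖ ^ 2 + σ ^ 2)
    (η : ℝ) (hη0 : 0 < η)
    (hA : η * Lmax * n ≤ 1 / 2)
    (hB : η ^ 2 * Lmax ^ 2 * n ^ 2 * ρ ≤ 1 / 4)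
    (y : EuclideanSpace ℝ (Fin d)) :
    F (igIter (fun i => gradient (f i)) η y n) - F xstar
      ≤ (1 - n * μ * η / 2) * (F y - F xstar) + Lmax ^ 2 * η ^ 3 * n ^ 3 * σ ^ 2 := by
  have hnR : (0:ℝ) < n := by exact_mod_cast hn
  have hLmax : (0:ℝ) < Lmax := lt_of_lt_of_le hL hLLmax
  set g : Fin n → EuclideanSpace ℝ (Fin d) → EuclideanSpace ℝ (Fin d) :=
    fun i => gradient (f i) with hg
  obtain ⟨X, hXdef⟩ : ∃ X, X = igIter g η y := ⟨_, rfl⟩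
  obtain ⟨G, hGdef⟩ : ∃ G, G = fun k : ℕ =>
      if h : k < n then g ⟨k, h⟩ (X k) else (0 : EuclideanSpace ℝ (Fin d)) := ⟨_, rfl⟩
  obtain ⟨G0, hG0def⟩ : ∃ G0, G0 = fun k : ℕ =>
      if h : k < n then g ⟨k, h⟩ y else (0 : EuclideanSpace ℝ (Fin d)) := ⟨_, rfl⟩
  have hstep : ∀ j, X (j + 1) = X j - η • G j := by
    intro j
    rw [hGdef, hXdef, igIter]
    by_cases h : j < n
    · simp [h]
    · simp [h]
  have hXsum : ∀ j, X j = y - η • ∑ k ∈ Finset.range j, G k := by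
    intro j
    induction j with
    | zero => rw [hXdef, igIter]; simp
    | succ j ih =>
      rw [hstep j, ih, Finset.sum_range_succ, smul_add]
      abel
  have hG0fin : ∑ k ∈ Finset.range n, G0 k = ∑ i, g i y := by
    rw [← Fin.sum_univ_eq_sum_range (fun k => G0 k) n]
    exact Finset.sum_congr rfl fun i _ => by simp [hG0def, i.isLt]
  have hSGfin : ∑ k ∈ Finset.range n, ‖G0 k‖ ^ 2 = ∑ i, ‖g i y‖ ^ 2 := by
    rw [← Fin.sum_univ_eq_sum_range (fun k => ‖G0 k‖ ^ 2) n]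
    exact Finset.sum_congr rfl fun i _ => by simp [hG0def, i.isLt]
  set gF := gradient F y with hgF
  set SG := ∑ k ∈ Finset.range n, ‖G0 k‖ ^ 2 with hSGdef
  set S := ∑ k ∈ Finset.range n, ‖G k‖ ^ 2 with hSdef
  have hS0 : 0 ≤ S := Finset.sum_nonneg fun _ _ => by positivity
  have hSG0 : 0 ≤ SG := Finset.sum_nonneg fun _ _ => by positivity
  have hSGle : SG ≤ n * (ρ * ‖gF‖ ^ 2 + σ ^ 2) := by
    have h1 := hSGC y
    rw [← hSGfin] at h1
    have h2 : SG = n * ((n:ℝ)⁻¹ * SG) := by field_simp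
    rw [h2]
    exact mul_le_mul_of_nonneg_left h1 hnR.le
  -- distance bound
  have hD : ∀ j, j ≤ n → ‖X j - y‖ ^ 2 ≤ η ^ 2 * S * j := by
    intro j hj
    have h1 : X j - y = -(η • ∑ k ∈ Finset.range j, G k) := by
      rw [hXsum j]; abel
    have h2 : ‖X j - y‖ = η * ‖∑ k ∈ Finset.range j, G k‖ := by
      rw [h1, norm_neg, norm_smul, Real.norm_eq_abs, abs_of_pos hη0]
    have h3 : ‖∑ k ∈ Finset.range j, G k‖ ≤ ∑ k ∈ Finset.range j, ‖G k‖ :=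
      norm_sum_le _ _
    have h4 : (∑ k ∈ Finset.range j, ‖G k‖) ^ 2
        ≤ j * ∑ k ∈ Finset.range j, ‖G k‖ ^ 2 := by
      simpa using sq_sum_le_card_mul_sum_sq (s := Finset.range j) (f := fun k => ‖G k‖)
    have h5 : ∑ k ∈ Finset.range j, ‖G k‖ ^ 2 ≤ S :=
      Finset.sum_le_sum_of_subset_of_nonneg (Finset.range_subset_range.2 hj)
        (fun _ _ _ => by positivity)
    have h6 : ‖∑ k ∈ Finset.range j, G k‖ ^ 2 ≤ S * j := by
      calc ‖∑ k ∈ Finset.range j, G k‖ ^ 2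
          ≤ (∑ k ∈ Finset.range j, ‖G k‖) ^ 2 := pow_le_pow_left₀ (norm_nonneg _) h3 2
        _ ≤ j * ∑ k ∈ Finset.range j, ‖G k‖ ^ 2 := h4
        _ ≤ j * S := mul_le_mul_of_nonneg_left h5 (Nat.cast_nonneg j)
        _ = S * j := mul_comm _ _
    calc ‖X j - y‖ ^ 2 = η ^ 2 * ‖∑ k ∈ Finset.range j, G k‖ ^ 2 := by rw [h2]; ring
      _ ≤ η ^ 2 * (S * j) := mul_le_mul_of_nonneg_left h6 (sq_nonneg η)
      _ = η ^ 2 * S * j := by ring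
  -- sum of squared distances
  have hgauss : (∑ k ∈ Finset.range n, (k:ℝ)) ≤ (n:ℝ) ^ 2 / 2 := by
    have h2 : (∑ k ∈ Finset.range n, k) * 2 = n * (n - 1) := Finset.sum_range_id_mul_two n
    have h3 : n * (n - 1) ≤ n ^ 2 := by
      calc n * (n-1) ≤ n * n := Nat.mul_le_mul_left n (Nat.sub_le n 1)
        _ = n ^ 2 := (sq n).symm
    have h4 : (∑ k ∈ Finset.range n, k) * 2 ≤ n ^ 2 := by omega
    have h5 : ((∑ k ∈ Finset.range n, k : ℕ) : ℝ) * 2 ≤ ((n:ℝ)) ^ 2 := by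
      exact_mod_cast h4
    push_cast at h5
    linarith
  have hDsum : ∑ k ∈ Finset.range n, ‖X k - y‖ ^ 2 ≤ η ^ 2 * S * ((n:ℝ) ^ 2 / 2) := by
    calc ∑ k ∈ Finset.range n, ‖X k - y‖ ^ 2
        ≤ ∑ k ∈ Finset.range n, η ^ 2 * S * (k:ℝ) :=
          Finset.sum_le_sum fun k hk => hD k (Finset.mem_range.1 hk).le
      _ = η ^ 2 * S * ∑ k ∈ Finset.range n, (k:ℝ) := (Finset.mul_sum _ _ _).symm
      _ ≤ η ^ 2 * S * ((n:ℝ) ^ 2 / 2) := by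
          apply mul_le_mul_of_nonneg_left hgauss (by positivity)
  -- per-step gradient deviation
  have hdev : ∀ k, k < n → ‖G k - G0 k‖ ≤ Lmax * ‖X k - y‖ := by
    intro k hk
    have := hsmooth_i ⟨k, hk⟩ (X k) y
    simpa [hGdef, hG0def, hk] using this
  have hGk : ∀ k, k < n → ‖G k‖ ^ 2 ≤ 2 * ‖G0 k‖ ^ 2 + 2 * Lmax ^ 2 * ‖X k - y‖ ^ 2 := by
    intro k hk
    have h1 : ‖G k‖ ≤ ‖G0 k‖ + Lmax * ‖X k - y‖ := by
      calc ‖G k‖ = ‖G0 k + (G k - G0 k)‖ := by rw [add_sub_cancel]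
        _ ≤ ‖G0 k‖ + ‖G k - G0 k‖ := norm_add_le _ _
        _ ≤ _ := by linarith [hdev k hk]
    nlinarith [norm_nonneg (G k), norm_nonneg (G0 k),
      mul_nonneg hLmax.le (norm_nonneg (X k - y)),
      sq_nonneg (‖G0 k‖ - Lmax * ‖X k - y‖)]
  have hS4 : S ≤ 4 * SG := by
    have h1 : S ≤ 2 * SG + 2 * Lmax ^ 2 * ∑ k ∈ Finset.range n, ‖X k - y‖ ^ 2 := by
      calc S ≤ ∑ k ∈ Finset.range n, (2 * ‖G0 k‖ ^ 2 + 2 * Lmax ^ 2 * ‖X k - y‖ ^ 2) :=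
            Finset.sum_le_sum fun k hk => hGk k (Finset.mem_range.1 hk)
        _ = 2 * SG + 2 * Lmax ^ 2 * ∑ k ∈ Finset.range n, ‖X k - y‖ ^ 2 := by
            rw [Finset.sum_add_distrib, ← Finset.mul_sum, ← Finset.mul_sum]
    have hB' : η ^ 2 * Lmax ^ 2 * (n:ℝ) ^ 2 ≤ 1 / 4 := by
      linarith [mul_le_mul_of_nonneg_left hρ (sq_nonneg (η * Lmax * (n:ℝ))), hB]
    have h2 : 2 * Lmax ^ 2 * ∑ k ∈ Finset.range n, ‖X k - y‖ ^ 2 ≤ (1/2) * S := by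
      have h3 : 2 * Lmax ^ 2 * ∑ k ∈ Finset.range n, ‖X k - y‖ ^ 2
          ≤ 2 * Lmax ^ 2 * (η ^ 2 * S * ((n:ℝ) ^ 2 / 2)) :=
        mul_le_mul_of_nonneg_left hDsum (by positivity)
      linarith [h3, mul_le_mul_of_nonneg_right hB' hS0]
    linarith
  -- the error vector
  set b := ∑ k ∈ Finset.range n, G k with hbdef
  set e := b - ∑ k ∈ Finset.range n, G0 k with hedef
  have he2 : ‖e‖ ^ 2 ≤ 2 * Lmax ^ 2 * η ^ 2 * (n:ℝ) ^ 4 * (ρ * ‖gF‖ ^ 2 + σ ^ 2) := by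
    have h1 : e = ∑ k ∈ Finset.range n, (G k - G0 k) := by
      rw [hedef, hbdef, Finset.sum_sub_distrib]
    have h2 : ‖e‖ ≤ ∑ k ∈ Finset.range n, ‖G k - G0 k‖ := h1 ▸ norm_sum_le _ _
    have h3 : (∑ k ∈ Finset.range n, ‖G k - G0 k‖) ^ 2
        ≤ n * ∑ k ∈ Finset.range n, ‖G k - G0 k‖ ^ 2 := by
      simpa using sq_sum_le_card_mul_sum_sq (s := Finset.range n) (f := fun k => ‖G k - G0 k‖)
    have h4 : ∑ k ∈ Finset.range n, ‖G k - G0 k‖ ^ 2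
        ≤ Lmax ^ 2 * ∑ k ∈ Finset.range n, ‖X k - y‖ ^ 2 := by
      rw [Finset.mul_sum]
      refine Finset.sum_le_sum fun k hk => ?_
      have := hdev k (Finset.mem_range.1 hk)
      nlinarith [norm_nonneg (G k - G0 k), norm_nonneg (X k - y)]
    have h5 : ‖e‖ ^ 2 ≤ (n:ℝ) * (Lmax ^ 2 * (η ^ 2 * S * ((n:ℝ) ^ 2 / 2))) := by
      have h6 : ‖e‖ ^ 2 ≤ (∑ k ∈ Finset.range n, ‖G k - G0 k‖) ^ 2 :=
        pow_le_pow_left₀ (norm_nonneg e) h2 2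
      have h7 : Lmax ^ 2 * ∑ k ∈ Finset.range n, ‖X k - y‖ ^ 2
          ≤ Lmax ^ 2 * (η ^ 2 * S * ((n:ℝ) ^ 2 / 2)) :=
        mul_le_mul_of_nonneg_left hDsum (by positivity)
      have h8 := mul_le_mul_of_nonneg_left h4 (Nat.cast_nonneg n : (0:ℝ) ≤ n)
      have h9 := mul_le_mul_of_nonneg_left h7 (Nat.cast_nonneg n : (0:ℝ) ≤ n)
      linarith [h6, h3]
    have h8 : S ≤ 4 * ((n:ℝ) * (ρ * ‖gF‖ ^ 2 + σ ^ 2)) := by linarith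
    have h10 := mul_le_mul_of_nonneg_left h8
      (show (0:ℝ) ≤ (n:ℝ) * Lmax ^ 2 * η ^ 2 * ((n:ℝ) ^ 2 / 2) by positivity)
    linarith [h5]
  -- inner product identity
  have ha : ∑ k ∈ Finset.range n, G0 k = (n:ℝ) • gF := by rw [hG0fin, ← hgradF y]
  set I : ℝ := inner ℝ gF b with hIdef
  have hinner : 2 * (n:ℝ) * I = (n:ℝ) ^ 2 * ‖gF‖ ^ 2 + ‖b‖ ^ 2 - ‖e‖ ^ 2 := by
    have h1 : ‖(n:ℝ) • gF - b‖ ^ 2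
        = ‖(n:ℝ) • gF‖ ^ 2 - 2 * inner ℝ ((n:ℝ) • gF) b + ‖b‖ ^ 2 :=
      norm_sub_sq_real _ _
    have h2 : ‖(n:ℝ) • gF - b‖ = ‖e‖ := by
      rw [hedef, ha, ← norm_neg]; congr 1; abel
    have h3 : ‖(n:ℝ) • gF‖ ^ 2 = (n:ℝ) ^ 2 * ‖gF‖ ^ 2 := by
      rw [norm_smul, Real.norm_eq_abs, abs_of_pos hnR]; ring
    have h4 : (inner ℝ ((n:ℝ) • gF) b : ℝ) = n * I := by
      rw [real_inner_smul_left, hIdef]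
    rw [h2, h3, h4] at h1
    linarith
  -- descent step
  have hXn : X n - y = -(η • b) := by rw [hXsum n]; abel
  have hdesc : F (X n) ≤ F y - η * I + L / 2 * (η ^ 2 * ‖b‖ ^ 2) := by
    have h0 := my_descent_lemma F hFdiff L hL.le hsmooth y (X n)
    rw [hXn] at h0
    have h1 : (inner ℝ gF (-(η • b)) : ℝ) = -(η * I) := by
      rw [inner_neg_right, real_inner_smul_right, hIdef]
    have h2 : ‖-(η • b)‖ ^ 2 = η ^ 2 * ‖b‖ ^ 2 := by
      rw [norm_neg, norm_smul, Real.norm_eq_abs, abs_of_pos hη0]; ring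
    rw [h1, h2] at h0
    linarith
  -- combine
  have hLηn : L * η * (n:ℝ) ≤ 1 / 2 := by
    linarith [mul_le_mul_of_nonneg_right hLLmax (mul_nonneg hη0.le (Nat.cast_nonneg n : (0:ℝ) ≤ n)), hA]
  have hkey : F (X n) ≤ F y - η * (n:ℝ) / 4 * ‖gF‖ ^ 2
      + Lmax ^ 2 * η ^ 3 * (n:ℝ) ^ 3 * σ ^ 2 := by
    have hd2 : 2 * (n:ℝ) * F (X n)
        ≤ 2 * (n:ℝ) * (F y - η * I + L / 2 * (η ^ 2 * ‖b‖ ^ 2)) :=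
      mul_le_mul_of_nonneg_left hdesc (by positivity)
    have hb0 : (0:ℝ) ≤ ‖b‖ ^ 2 := by positivity
    have t1 : η * ‖e‖ ^ 2
        ≤ 2 * Lmax ^ 2 * η ^ 3 * (n:ℝ) ^ 4 * ρ * ‖gF‖ ^ 2
          + 2 * Lmax ^ 2 * η ^ 3 * (n:ℝ) ^ 4 * σ ^ 2 := by
      linarith [mul_le_mul_of_nonneg_left he2 hη0.le]
    have t2 : 2 * Lmax ^ 2 * η ^ 3 * (n:ℝ) ^ 4 * ρ * ‖gF‖ ^ 2
        ≤ (1/2) * η * (n:ℝ) ^ 2 * ‖gF‖ ^ 2 := by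
      linarith [mul_le_mul_of_nonneg_right hB
        (show (0:ℝ) ≤ 2 * η * (n:ℝ) ^ 2 * ‖gF‖ ^ 2 by positivity)]
    have t3 : L * η ^ 2 * (n:ℝ) * ‖b‖ ^ 2 ≤ (1/2) * η * ‖b‖ ^ 2 := by
      linarith [mul_le_mul_of_nonneg_right hLηn (mul_nonneg hη0.le hb0)]
    have hηb : 0 ≤ η * ‖b‖ ^ 2 := mul_nonneg hη0.le hb0
    have hinner2 : 2 * (n:ℝ) * (η * I)
        = η * ((n:ℝ) ^ 2 * ‖gF‖ ^ 2 + ‖b‖ ^ 2 - ‖e‖ ^ 2) := by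
      linear_combination η * hinner
    have hkey2 : 2 * (n:ℝ) * F (X n)
        ≤ 2 * (n:ℝ) * (F y - η * (n:ℝ) / 4 * ‖gF‖ ^ 2
          + Lmax ^ 2 * η ^ 3 * (n:ℝ) ^ 3 * σ ^ 2) := by
      linarith [hd2, t1, t2, t3, hinner2, hηb]
    exact (mul_le_mul_iff_right₀ (by positivity : (0:ℝ) < 2 * (n:ℝ))).1 hkey2
  -- PL step
  have hN2 : 2 * μ * (F y - F xstar) ≤ ‖gF‖ ^ 2 := by
    have h1 := hPL y
    rw [← hgF] at h1
    have h2 : 2 * μ * (F y - F xstar) ≤ 2 * μ * (1 / (2 * μ) * ‖gF‖ ^ 2) :=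
      mul_le_mul_of_nonneg_left h1 (by positivity)
    have h3 : 2 * μ * (1 / (2 * μ) * ‖gF‖ ^ 2) = ‖gF‖ ^ 2 := by field_simp
    linarith
  have hgoal : F (X n) - F xstar
      ≤ (1 - n * μ * η / 2) * (F y - F xstar) + Lmax ^ 2 * η ^ 3 * n ^ 3 * σ ^ 2 := by
    have h1 : η * (n:ℝ) / 4 * (2 * μ * (F y - F xstar)) ≤ η * (n:ℝ) / 4 * ‖gF‖ ^ 2 :=
      mul_le_mul_of_nonneg_left hN2 (by positivity)
    linarith [hkey, h1]
  rw [hXdef] at hgoal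
  exact hgoal

set_option maxHeartbeats 2000000 in
/-- Incremental gradient method for `μ`-PL objectives under the relaxed strong
growth condition: deterministic linear convergence to a noise-dominated
neighbourhood, where `igIter … n` applied `T` times is the iterate at the end
of epoch `T`. -/
theorem ig_pl_relaxed_sgc_rate
    (d n : ℕ) (hn : 0 < n)
    (f : Fin n → EuclideanSpace ℝ (Fin d) → ℝ)
    (hdiff : ∀ i, Differentiable ℝ (f i))
    (F : EuclideanSpace ℝ (Fin d) → ℝ)
    (hF : F = fun x => (n : ℝ)⁻¹ * ∑ i, f i x)
    (L Lmax μ : ℝ) (hL : 0 < L) (hμ : 0 < μ) (hLLmax : L ≤ Lmax)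
    (hsmooth : ∀ x y : EuclideanSpace ℝ (Fin d),
      ‖gradient F x - gradient F y‖ ≤ L * ‖x - y‖)
    (hsmooth_i : ∀ i, ∀ x y : EuclideanSpace ℝ (Fin d),
      ‖gradient (f i) x - gradient (f i) y‖ ≤ Lmax * ‖x - y‖)
    (xstar : EuclideanSpace ℝ (Fin d))
    (hmin : ∀ x, F xstar ≤ F x)
    (hPL : ∀ x, F x - F xstar ≤ 1 / (2 * μ) * ‖gradient F x‖ ^ 2)
    (ρ σ : ℝ) (hρ : 1 ≤ ρ) (hσ : 0 ≤ σ)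
    (hSGC : ∀ x, (n : ℝ)⁻¹ * ∑ i, ‖gradient (f i) x‖ ^ 2
      ≤ ρ * ‖gradient F x‖ ^ 2 + σ ^ 2)
    (η : ℝ) (hη0 : 0 < η)
    (hη : η ≤ min (1 / (Real.sqrt 2 * n * Lmax)) (1 / (2 * Lmax * n * Real.sqrt ρ)))
    (x0 : EuclideanSpace ℝ (Fin d)) (T : ℕ) :
    F ((fun y => igIter (fun i => gradient (f i)) η y n)^[T] x0) - F xstar
      ≤ (1 - n * μ * η / 2) ^ T * (F x0 - F xstar)
        + 2 * Lmax ^ 2 * η ^ 2 * n ^ 2 * σ ^ 2 / μ := by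
  have hnR : (0:ℝ) < n := by exact_mod_cast hn
  have hLmax : (0:ℝ) < Lmax := lt_of_lt_of_le hL hLLmax
  have hρ0 : (0:ℝ) < ρ := lt_of_lt_of_le one_pos hρ
  have hsρ : 1 ≤ Real.sqrt ρ := by
    rw [show (1:ℝ) = Real.sqrt 1 from Real.sqrt_one.symm]
    exact Real.sqrt_le_sqrt hρ
  have hη2 : η ≤ 1 / (2 * Lmax * n * Real.sqrt ρ) := hη.trans (min_le_right _ _)
  have hden : (0:ℝ) < 2 * Lmax * n * Real.sqrt ρ := by positivity
  have hmul : η * (2 * Lmax * ↑n * Real.sqrt ρ) ≤ 1 := by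
    rw [le_div_iff₀ hden] at hη2
    linarith
  have hA : η * Lmax * ↑n ≤ 1 / 2 := by
    have h1 : 2 * η * Lmax * (n:ℝ) * 1 ≤ 2 * η * Lmax * (n:ℝ) * Real.sqrt ρ :=
      mul_le_mul_of_nonneg_left hsρ (by positivity)
    linarith
  have hB : η ^ 2 * Lmax ^ 2 * (n:ℝ) ^ 2 * ρ ≤ 1 / 4 := by
    have h1 : (η * (2 * Lmax * ↑n * Real.sqrt ρ)) ^ 2 ≤ 1 := by
      have h0 : 0 ≤ η * (2 * Lmax * ↑n * Real.sqrt ρ) := by positivity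
      nlinarith
    have h2 : (η * (2 * Lmax * ↑n * Real.sqrt ρ)) ^ 2
        = 4 * (η ^ 2 * Lmax ^ 2 * (n:ℝ) ^ 2 * ρ) := by
      have hsq : Real.sqrt ρ ^ 2 = ρ := Real.sq_sqrt hρ0.le
      nlinarith [hsq]
    linarith
  have hFdiff : Differentiable ℝ F := by
    rw [hF]
    exact Differentiable.const_mul (Differentiable.fun_sum fun i _ => hdiff i) _
  have hgradF : ∀ x, (n : ℝ) • gradient F x = ∑ i, gradient (f i) x := by
    intro x
    rw [hF, my_gradient_avg f hdiff x, smul_smul,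
      mul_inv_cancel₀ (ne_of_gt hnR), one_smul]
  have hN0 : (0:ℝ) ≤ 2 * Lmax ^ 2 * η ^ 2 * n ^ 2 * σ ^ 2 / μ := by positivity
  by_cases hzero : ∀ x, gradient F x = 0
  · have hconst : ∀ z, F z - F xstar = 0 := by
      intro z
      have h1 := hPL z
      rw [hzero z] at h1
      simp at h1
      have h2 := hmin z
      linarith
    rw [hconst, hconst]
    simp
    positivity
  · push_neg at hzero
    obtain ⟨w, hw⟩ := hzero
    have hNw : (0:ℝ) < ‖gradient F w‖ ^ 2 := by
      have := norm_pos_iff.2 hw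
      positivity
    have hμL : μ ≤ L := by
      have hd := my_descent_lemma F hFdiff L hL.le hsmooth w (w - (1/L) • gradient F w)
      have h1 : (w - (1/L) • gradient F w) - w = -((1/L) • gradient F w) := by abel
      rw [h1, inner_neg_right, real_inner_smul_right, real_inner_self_eq_norm_sq,
        norm_neg, norm_smul, Real.norm_eq_abs] at hd
      have habs : |1/L| = 1/L := abs_of_pos (by positivity)
      rw [habs] at hd
      have hLe : L / 2 * (1/L * ‖gradient F w‖) ^ 2 = 1/(2*L) * ‖gradient F w‖ ^ 2 := by
        field_simp
      rw [hLe] at hd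
      have key : F xstar ≤ F w - 1/(2*L) * ‖gradient F w‖ ^ 2 := by
        refine le_trans (hmin (w - (1/L) • gradient F w)) ?_
        have hhalf : 1/L * ‖gradient F w‖ ^ 2 = 2 * (1/(2*L) * ‖gradient F w‖ ^ 2) := by
          field_simp
        linarith
      have h2 := hPL w
      have h5 : 1/(2*L) * ‖gradient F w‖ ^ 2 ≤ 1/(2*μ) * ‖gradient F w‖ ^ 2 := by
        linarith
      have h6 : 1/(2*L) ≤ 1/(2*μ) := by
        have := (mul_le_mul_iff_left₀ hNw).1 h5
        linarith
      have h7 := (div_le_div_iff₀ (by positivity : (0:ℝ) < 2*L)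
        (by positivity : (0:ℝ) < 2*μ)).1 h6
      linarith
    have hq0 : (0:ℝ) ≤ 1 - n * μ * η / 2 := by
      have h1 : μ * (η * (n:ℝ)) ≤ Lmax * (η * (n:ℝ)) :=
        mul_le_mul_of_nonneg_right (hμL.trans hLLmax)
          (mul_nonneg hη0.le (Nat.cast_nonneg n))
      linarith
    have hqN : (1 - ↑n * μ * η / 2) * (2 * Lmax ^ 2 * η ^ 2 * ↑n ^ 2 * σ ^ 2 / μ)
        + Lmax ^ 2 * η ^ 3 * ↑n ^ 3 * σ ^ 2
        = 2 * Lmax ^ 2 * η ^ 2 * ↑n ^ 2 * σ ^ 2 / μ := by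
      field_simp
      ring
    induction T with
    | zero =>
      simp
      linarith [hN0]
    | succ T ih =>
      rw [Function.iterate_succ_apply', pow_succ]
      have hepoch := my_epoch d n hn f F hFdiff hgradF L Lmax μ hL hμ hLLmax
        hsmooth hsmooth_i xstar hPL ρ σ hρ hσ hSGC η hη0 hA hB
        ((fun y => igIter (fun i => gradient (f i)) η y n)^[T] x0)
      have hmono := mul_le_mul_of_nonneg_left ih hq0
      linarith [hepoch, hmono, hqN]
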